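/- For 2 ≤ k < n and fixed values j_2, ..., j_k, a permutation σ ∈ S_n has circular shift representation beginning with j_2 ⋯ j_k if and only if deleting the symbols k+2, k+3, ..., n from the one-line representation of σ yields a cyclic rotation of a fixed word τ of length k+1 depending only on j_2, ..., j_k. -/

import Mathlib

def pcyc (k : ℕ) : Equiv.Perm ℕ := (List.range' 1 k).formPerm

/-- The ordered composition `p_2^{e 2} ∘ p_3^{e 3} ∘ ⋯ ∘ p_n^{e n}`. -/
def circProd (n : ℕ) (e : ℕ → ℕ) : Equiv.Perm ℕ :=
  ((List.range' 2 (n - 1)).map fun i => (pcyc i) ^ (e i)).prod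

open List Equiv

lemma mem_range1 {s n x : ℕ} : x ∈ List.range' s n ↔ s ≤ x ∧ x < s + n := by
  rw [List.mem_range']
  constructor
  · rintro ⟨i, hi, rfl⟩; omega
  · intro h; exact ⟨x - s, by omega, by omega⟩

lemma pow_fix {σ : Perm ℕ} {x : ℕ} (h : σ x = x) (e : ℕ) : (σ ^ e) x = x := by
  induction e with
  | zero => rfl
  | succ e ih => rw [pow_succ, Perm.mul_apply, h, ih]

lemma fpow_mem {l : List ℕ} {x : ℕ} (h : x ∈ l) (e : ℕ) : (l.formPerm ^ e) x ∈ l := by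
  induction e with
  | zero => simpa
  | succ e ih => rw [pow_succ', Perm.mul_apply]; exact List.formPerm_apply_mem_of_mem ih

lemma pcyc_pow_fix {m e x : ℕ} (hx : x ∉ Set.Icc 1 m) : (pcyc m ^ e) x = x := by
  apply pow_fix
  apply List.formPerm_apply_of_notMem
  simp only [mem_range1]
  simp only [Set.mem_Icc] at hx
  omega

lemma pcyc_pow_mem {m e x : ℕ} (hx : x ∈ Set.Icc 1 m) : (pcyc m ^ e) x ∈ Set.Icc 1 m := by
  have h := fpow_mem (l := List.range' 1 m) (x := x) ?_ e
  · rw [mem_range1] at h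
    rw [show (pcyc m ^ e) x = ((List.range' 1 m).formPerm ^ e) x from rfl]
    rw [Set.mem_Icc]
    constructor
    · exact h.1
    · have := h.2; omega
  · simp only [mem_range1]; simp only [Set.mem_Icc] at hx; omega

lemma pcyc_pow_getElem {m e i : ℕ} (hi : i < m) :
    (pcyc m ^ e) (1 + i) = 1 + (i + e) % m := by
  have h := List.formPerm_pow_apply_getElem (List.range' 1 m) List.nodup_range' e i
    (by simpa using hi)
  simpa [pcyc] using h

lemma map_pcyc_pow_range' (m e : ℕ) :
    (List.range' 1 m).map (pcyc m ^ e) = (List.range' 1 m).rotate e := by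
  apply List.ext_getElem
  · simp
  · intro i h1 h2
    simp only [List.getElem_map, List.getElem_rotate, List.getElem_range'_1, List.length_range']
    rw [pcyc_pow_getElem (by simpa using h1)]

lemma pcyc_pow_apply_top {m e : ℕ} (he : e < m) : (pcyc m ^ e) (m - e) = m := by
  have h1 : m - e = 1 + (m - 1 - e) := by omega
  rw [h1, pcyc_pow_getElem (by omega)]
  have : (m - 1 - e + e) % m = m - 1 := by
    rw [Nat.mod_eq_of_lt (by omega)]
    omega
  rw [this]; omega

lemma prod_fix {L : List ℕ} {e : ℕ → ℕ} {m x : ℕ} (hL : ∀ i ∈ L, i ≤ m)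
    (hx : x ∉ Set.Icc 1 m) : ((L.map fun i => pcyc i ^ e i).prod) x = x := by
  induction L with
  | nil => rfl
  | cons a L ih =>
    rw [List.map_cons, List.prod_cons, Perm.mul_apply]
    rw [ih (fun i hi => hL i (List.mem_cons_of_mem _ hi))]
    apply pcyc_pow_fix
    intro hmem
    apply hx
    have ha := hL a List.mem_cons_self
    simp only [Set.mem_Icc] at hmem ⊢
    omega

lemma circProd_fix {n : ℕ} {e : ℕ → ℕ} {x : ℕ} (hx : x ∉ Set.Icc 1 n) :
    circProd n e x = x := by
  apply prod_fix (m := n) _ hx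
  intro i hi
  rw [mem_range1] at hi
  omega

lemma perm_maps {A : Perm ℕ} {S : Set ℕ} (hA : ∀ x, x ∉ S → A x = x) {x : ℕ} (hx : x ∈ S) :
    A x ∈ S := by
  by_contra h
  have h2 := hA _ h
  have h3 : A x = x := A.injective h2
  exact h (by rw [h3]; exact hx)

lemma circProd_succ {n : ℕ} (hn : 1 ≤ n) (e : ℕ → ℕ) :
    circProd (n + 1) e = circProd n e * pcyc (n + 1) ^ e (n + 1) := by
  unfold circProd
  have h : List.range' 2 (n + 1 - 1) = List.range' 2 (n - 1) ++ List.range' (2 + 1 * (n - 1)) 1 := by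
    rw [List.range'_append]
    congr 1
    omega
  rw [h, List.map_append, List.prod_append]
  congr 1
  rw [show 2 + 1 * (n - 1) = n + 1 by omega]
  simp

lemma circProd_congr {n : ℕ} {e f : ℕ → ℕ} (h : ∀ i, 2 ≤ i → i ≤ n → e i = f i) :
    circProd n e = circProd n f := by
  unfold circProd
  congr 1
  apply List.map_congr_left
  intro i hi
  rw [mem_range1] at hi
  rw [h i hi.1 (by omega)]

lemma repr_exists : ∀ (n : ℕ) (σ : Perm ℕ), (∀ x, x ∉ Set.Icc 1 n → σ x = x) →
    ∃ e : ℕ → ℕ, (∀ i ∈ Finset.Icc 2 n, e i < i) ∧ σ = circProd n e := by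
  intro n
  induction n with
  | zero =>
    intro σ hσ
    refine ⟨fun _ => 0, by simp, ?_⟩
    have : σ = 1 := by
      ext x
      exact hσ x (by simp only [Set.mem_Icc]; omega)
    rw [this]
    rfl
  | succ n ih =>
    intro σ hσ
    set t := σ.symm (n + 1) with ht
    have htmem : t ∈ Set.Icc 1 (n + 1) := by
      by_contra h
      have h1 := hσ t h
      have h2 : σ t = n + 1 := by rw [ht]; exact Equiv.apply_symm_apply σ (n + 1)
      rw [h1] at h2
      exact h (by rw [h2]; simp only [Set.mem_Icc]; omega)
    rw [Set.mem_Icc] at htmem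
    set j := n + 1 - t with hj
    have hjlt : j < n + 1 := by omega
    have hpt : (pcyc (n + 1) ^ j) t = n + 1 := by
      have := pcyc_pow_apply_top (m := n + 1) (e := j) hjlt
      rwa [show n + 1 - j = t by omega] at this
    set σ' : Perm ℕ := σ * (pcyc (n + 1) ^ j)⁻¹ with hσ'
    have hfix : ∀ x, x ∉ Set.Icc 1 n → σ' x = x := by
      intro x hx
      rcases eq_or_ne x (n + 1) with rfl | hne
      · have hinv : (pcyc (n + 1) ^ j)⁻¹ (n + 1) = t := by
          rw [Equiv.Perm.inv_eq_iff_eq]; exact hpt.symm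
        rw [hσ', Perm.mul_apply, hinv, ht, Equiv.apply_symm_apply]
      · have hx1 : x ∉ Set.Icc 1 (n + 1) := by
          simp only [Set.mem_Icc] at hx ⊢
          omega
        have h1 : (pcyc (n + 1) ^ j)⁻¹ x = x := by
          rw [Equiv.Perm.inv_eq_iff_eq]
          exact (pcyc_pow_fix hx1).symm
        rw [hσ', Perm.mul_apply, h1]
        exact hσ x hx1
    obtain ⟨e', he'lt, he'⟩ := ih σ' hfix
    refine ⟨Function.update e' (n + 1) j, ?_, ?_⟩
    · intro i hi
      rw [Finset.mem_Icc] at hi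
      rcases eq_or_ne i (n + 1) with rfl | hne
      · simpa using hjlt
      · rw [Function.update_of_ne hne]
        exact he'lt i (Finset.mem_Icc.mpr ⟨hi.1, by omega⟩)
    · rcases Nat.eq_zero_or_pos n with rfl | hn
      · have hj0 : j = 0 := by omega
        have : σ' = σ := by
          rw [hσ', hj0]
          simp
        rw [← this, he']
        unfold circProd
        rfl
      · rw [circProd_succ hn]
        have h1 : circProd n (Function.update e' (n + 1) j) = circProd n e' := by
          apply circProd_congr
          intro i h2 h3
          rw [Function.update_of_ne (by omega)]
        rw [h1, Function.update_self, ← he', hσ']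
        group

lemma circProd_apply_top {n : ℕ} (hn : 1 ≤ n) {e : ℕ → ℕ} (he : e (n + 1) < n + 1) :
    circProd (n + 1) e (n + 1 - e (n + 1)) = n + 1 := by
  rw [circProd_succ hn, Perm.mul_apply, pcyc_pow_apply_top he]
  exact circProd_fix (by simp only [Set.mem_Icc]; omega)

lemma repr_unique : ∀ (n : ℕ) (e f : ℕ → ℕ), (∀ i ∈ Finset.Icc 2 n, e i < i) →
    (∀ i ∈ Finset.Icc 2 n, f i < i) → circProd n e = circProd n f →
    ∀ i ∈ Finset.Icc 2 n, e i = f i := by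
  intro n
  induction n with
  | zero => intro e f _ _ _ i hi; simp at hi
  | succ n ih =>
    intro e f he hf heq i hi
    rcases Nat.eq_zero_or_pos n with rfl | hn
    · simp only [Finset.mem_Icc] at hi; omega
    have hen : e (n + 1) < n + 1 := he _ (Finset.mem_Icc.mpr ⟨by omega, le_refl _⟩)
    have hfn : f (n + 1) < n + 1 := hf _ (Finset.mem_Icc.mpr ⟨by omega, le_refl _⟩)
    have h1 := circProd_apply_top hn hen
    have h2 := circProd_apply_top hn hfn
    rw [heq] at h1
    have h3 : n + 1 - e (n + 1) = n + 1 - f (n + 1) :=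
      (circProd (n + 1) f).injective (h1.trans h2.symm)
    have htop : e (n + 1) = f (n + 1) := by omega
    have h4 : circProd n e = circProd n f := by
      have := heq
      rw [circProd_succ hn, circProd_succ hn, htop] at this
      exact mul_right_cancel this
    rw [Finset.mem_Icc] at hi
    rcases eq_or_ne i (n + 1) with rfl | hne
    · exact htop
    · exact ih e f (fun j hj => he j (by simp only [Finset.mem_Icc] at hj ⊢; omega))
        (fun j hj => hf j (by simp only [Finset.mem_Icc] at hj ⊢; omega)) h4 i
        (Finset.mem_Icc.mpr ⟨hi.1, by omega⟩)

lemma filter_rotate' (p : ℕ → Bool) (l : List ℕ) (e : ℕ) :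
    ∃ r, (l.rotate e).filter p = (l.filter p).rotate r := by
  rcases eq_or_ne l [] with rfl | hl
  · exact ⟨0, by simp⟩
  have hpos : 0 < l.length := List.length_pos_iff.mpr hl
  have hlt : e % l.length < l.length := Nat.mod_lt _ hpos
  refine ⟨((l.take (e % l.length)).filter p).length, ?_⟩
  have key : ∀ a b : List ℕ, (a ++ b).rotate a.length = b ++ a := by
    intro a b
    rw [List.rotate_eq_drop_append_take (by simp), List.drop_left, List.take_left]
  have hsplit : l.filter p =
      (l.take (e % l.length)).filter p ++ (l.drop (e % l.length)).filter p := by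
    conv_lhs => rw [← List.take_append_drop (e % l.length) l]
    rw [List.filter_append]
  rw [← List.rotate_mod, List.rotate_eq_drop_append_take hlt.le, List.filter_append,
    hsplit, key]

lemma tail_prod_fix {k j x : ℕ} {e : ℕ → ℕ} (hx : x ∉ Set.Icc 1 (k + j)) :
    (((List.range' (k + 1) j).map fun i => pcyc i ^ e i).prod) x = x := by
  apply prod_fix (m := k + j) _ hx
  intro i hi
  rw [mem_range1] at hi
  omega

lemma W_tail (n k : ℕ) (h2 : 1 ≤ k) (hk : k < n) (A : Perm ℕ)
    (hA : ∀ x, x ∉ Set.Icc 1 k → A x = x) (e : ℕ → ℕ) :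
    ∀ j, j ≤ n - k → ∃ r,
      ((List.range' 1 n).map
          (A * ((List.range' (k + 1) j).map fun i => pcyc i ^ e i).prod)).filter
        (fun x => decide (x ≤ k + 1)) = ((List.range' 1 (k + 1)).map A).rotate r := by
  intro j
  induction j with
  | zero =>
    intro _
    refine ⟨0, ?_⟩
    rw [List.rotate_zero]
    simp only [List.range'_zero, List.map_nil, List.prod_nil, mul_one]
    have hsplit : List.range' 1 n = List.range' 1 (k + 1) ++ List.range' (k + 2) (n - (k + 1)) := by
      have := List.range'_append_1 (s := 1) (m := k + 1) (n := n - (k + 1))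
      rw [show 1 + (k + 1) = k + 2 by omega] at this
      rw [this]
      congr 1
      omega
    rw [hsplit, List.map_append, List.filter_append]
    have h1 : (((List.range' 1 (k + 1)).map A).filter fun x => decide (x ≤ k + 1)) =
        (List.range' 1 (k + 1)).map A := by
      rw [List.filter_eq_self]
      intro a ha
      rw [List.mem_map] at ha
      obtain ⟨x, hx, rfl⟩ := ha
      rw [mem_range1] at hx
      rcases Nat.lt_or_ge x (k + 1) with h | h
      · have := perm_maps hA (x := x) (by simp only [Set.mem_Icc]; omega)
        rw [Set.mem_Icc] at this
        simp only [decide_eq_true_eq]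
        omega
      · have hxk : x = k + 1 := by omega
        rw [hA x (by simp only [Set.mem_Icc]; omega)]
        simp only [decide_eq_true_eq]
        omega
    have h2 : (((List.range' (k + 2) (n - (k + 1))).map A).filter
        fun x => decide (x ≤ k + 1)) = [] := by
      rw [List.filter_eq_nil_iff]
      intro a ha
      rw [List.mem_map] at ha
      obtain ⟨x, hx, rfl⟩ := ha
      rw [mem_range1] at hx
      rw [hA x (by simp only [Set.mem_Icc]; omega)]
      simp only [decide_eq_true_eq]
      omega
    rw [h1, h2, List.append_nil]
  | succ j ih =>
    intro hj
    obtain ⟨r, hr⟩ := ih (by omega)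
    set m := k + 1 + j with hm
    have hmn : m ≤ n := by omega
    set B := ((List.range' (k + 1) j).map fun i => pcyc i ^ e i).prod with hB
    have hprod : ((List.range' (k + 1) (j + 1)).map fun i => pcyc i ^ e i).prod
        = B * pcyc m ^ e m := by
      have hsp : List.range' (k + 1) (j + 1) = List.range' (k + 1) j ++ [m] := by
        have := List.range'_append_1 (s := k + 1) (m := j) (n := 1)
        rw [← this]
        rw [List.range'_one]
      rw [hsp, List.map_append, List.prod_append]
      simp [hB]
    rw [hprod, ← mul_assoc]
    have hAB : ∀ x, x ∉ Set.Icc 1 (k + j) → (A * B) x = x := by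
      intro x hx
      rw [Perm.mul_apply, hB, tail_prod_fix hx]
      apply hA
      simp only [Set.mem_Icc] at hx ⊢
      omega
    have hmap : (List.range' 1 n).map ⇑(A * B * pcyc m ^ e m)
        = (((List.range' 1 m).rotate (e m)).map (A * B))
          ++ ((List.range' (m + 1) (n - m)).map (A * B)) := by
      have hc : ⇑(A * B * pcyc m ^ e m) = ⇑(A * B) ∘ ⇑(pcyc m ^ e m) := by
        ext x; simp [Perm.mul_apply]
      rw [hc, ← List.map_map]
      have hsplit : List.range' 1 n = List.range' 1 m ++ List.range' (m + 1) (n - m) := by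
        have := List.range'_append_1 (s := 1) (m := m) (n := n - m)
        rw [show 1 + m = m + 1 by omega] at this
        rw [this]
        congr 1
        omega
      rw [hsplit, List.map_append]
      have hfirst : (List.range' 1 m).map ⇑(pcyc m ^ e m) = (List.range' 1 m).rotate (e m) :=
        map_pcyc_pow_range' m (e m)
      have hsecond : (List.range' (m + 1) (n - m)).map ⇑(pcyc m ^ e m)
          = List.range' (m + 1) (n - m) := by
        conv_rhs => rw [← List.map_id (List.range' (m + 1) (n - m))]
        apply List.map_congr_left
        intro x hx
        rw [mem_range1] at hx
        exact pcyc_pow_fix (by simp only [Set.mem_Icc]; omega)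
      rw [hfirst, hsecond, List.map_append]
    rw [hmap, List.filter_append]
    have htail : (((List.range' (m + 1) (n - m)).map (A * B)).filter
        fun x => decide (x ≤ k + 1)) = [] := by
      rw [List.filter_eq_nil_iff]
      intro a ha
      rw [List.mem_map] at ha
      obtain ⟨x, hx, rfl⟩ := ha
      rw [mem_range1] at hx
      rw [hAB x (by simp only [Set.mem_Icc]; omega)]
      simp only [decide_eq_true_eq]
      omega
    rw [htail, List.append_nil]
    rw [List.map_rotate]
    obtain ⟨s, hs⟩ := filter_rotate' (fun x => decide (x ≤ k + 1))
      ((List.range' 1 m).map (A * B)) (e m)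
    rw [hs]
    have hmain : (((List.range' 1 m).map (A * B)).filter fun x => decide (x ≤ k + 1))
        = (((List.range' 1 n).map (A * B)).filter fun x => decide (x ≤ k + 1)) := by
      have hsplit : List.range' 1 n = List.range' 1 m ++ List.range' (m + 1) (n - m) := by
        have := List.range'_append_1 (s := 1) (m := m) (n := n - m)
        rw [show 1 + m = m + 1 by omega] at this
        rw [this]
        congr 1
        omega
      rw [hsplit, List.map_append, List.filter_append, htail, List.append_nil]
    rw [hmain, hr, List.rotate_rotate]
    exact ⟨r + s, rfl⟩

lemma circProd_split {n k : ℕ} (h1 : 1 ≤ k) (hkn : k ≤ n) (e : ℕ → ℕ) :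
    circProd n e = circProd k e * ((List.range' (k + 1) (n - k)).map fun i => pcyc i ^ e i).prod := by
  unfold circProd
  rw [← List.prod_append, ← List.map_append]
  congr 2
  have := List.range'_append_1 (s := 2) (m := k - 1) (n := n - k)
  rw [show 2 + (k - 1) = k + 1 by omega, show k - 1 + (n - k) = n - 1 by omega] at this
  exact this.symm

theorem stmt14 (n k : ℕ) (h2 : 2 ≤ k) (hk : k < n) (d : ℕ → ℕ)
    (hd : ∀ i ∈ Finset.Icc 2 k, d i < i) :
    ∃ τ : List ℕ, τ.length = k + 1 ∧
      ∀ σ : Equiv.Perm ℕ, (∀ i, i ∉ Set.Icc 1 n → σ i = i) →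
        ((∃ e : ℕ → ℕ, (∀ i ∈ Finset.Icc 2 n, e i < i) ∧
            (∀ i ∈ Finset.Icc 2 k, e i = d i) ∧ σ = circProd n e) ↔
          ∃ r : ℕ,
            ((List.range' 1 n).map fun x => σ x).filter (fun x => decide (x ≤ k + 1)) =
              τ.rotate r) := by
  set A : Perm ℕ := circProd k d with hA
  have hAfix : ∀ x, x ∉ Set.Icc 1 k → A x = x := fun x hx => circProd_fix hx
  set τ : List ℕ := (List.range' 1 (k + 1)).map A with hτ
  have hτlen : τ.length = k + 1 := by simp [hτ]
  have hτk : ∀ (h : k < τ.length), τ[k] = k + 1 := by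
    intro h
    rw [List.getElem_of_eq hτ h]
    simp only [List.getElem_map, List.getElem_range'_1]
    rw [hAfix (1 + k) (by simp only [Set.mem_Icc]; omega)]
    omega
  have hτnd : τ.Nodup := (List.nodup_range').map A.injective
  refine ⟨τ, hτlen, ?_⟩
  intro σ hσ
  constructor
  · rintro ⟨e, he, hed, rfl⟩
    have hsplit := circProd_split (by omega : 1 ≤ k) hk.le e
    have hAe : circProd k e = A := by
      rw [hA]
      apply circProd_congr
      intro i hi1 hi2
      exact hed i (Finset.mem_Icc.mpr ⟨hi1, hi2⟩)
    rw [hAe] at hsplit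
    obtain ⟨r, hr⟩ := W_tail n k (by omega) hk A hAfix e (n - k) le_rfl
    refine ⟨r, ?_⟩
    rw [← hτ] at hr
    rw [← hr, hsplit]
  · rintro ⟨r, hr⟩
    obtain ⟨e, he, hee⟩ := repr_exists n σ hσ
    set A' : Perm ℕ := circProd k e with hA'
    have hA'fix : ∀ x, x ∉ Set.Icc 1 k → A' x = x := fun x hx => circProd_fix hx
    set τ' : List ℕ := (List.range' 1 (k + 1)).map A' with hτ'
    have hτ'len : τ'.length = k + 1 := by simp [hτ']
    have hτ'k : ∀ (h : k < τ'.length), τ'[k] = k + 1 := by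
      intro h
      rw [List.getElem_of_eq hτ' h]
      simp only [List.getElem_map, List.getElem_range'_1]
      rw [hA'fix (1 + k) (by simp only [Set.mem_Icc]; omega)]
      omega
    have hτ'nd : τ'.Nodup := (List.nodup_range').map A'.injective
    obtain ⟨r', hr'⟩ := W_tail n k (by omega) hk A' hA'fix e (n - k) le_rfl
    have hsplit := circProd_split (by omega : 1 ≤ k) hk.le e
    rw [← hA'] at hsplit
    have hWeq : ((List.range' 1 n).map fun x => σ x).filter (fun x => decide (x ≤ k + 1))
        = τ'.rotate r' := by
      rw [hee, hsplit]
      exact hr'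
    have heq : τ.rotate r = τ'.rotate r' := by rw [← hr, hWeq]
    -- deduce τ = τ'
    have hrot : τ ~r τ' := by
      refine IsRotated.trans (show τ ~r τ.rotate r from ⟨r, rfl⟩) ?_
      rw [heq]
      exact IsRotated.symm (show τ' ~r τ'.rotate r' from ⟨r', rfl⟩)
    obtain ⟨s, hs⟩ := hrot
    have hklt : k < τ.length := by omega
    have hklt' : k < (τ.rotate s).length := by rw [List.length_rotate]; omega
    have hmodlt : (k + s) % τ.length < τ.length := Nat.mod_lt _ (by omega)
    have hget : (τ.rotate s)[k] = τ[(k + s) % τ.length] := List.getElem_rotate τ s k hklt'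
    have hgk : τ[(k + s) % τ.length]'hmodlt = τ[k]'hklt := by
      rw [← hget, List.getElem_of_eq hs hklt', hτ'k (by omega), hτk hklt]
    have hmod : (k + s) % τ.length = k := hτnd.getElem_inj_iff.mp hgk
    have hs0 : s % (k + 1) = 0 := by
      rw [hτlen] at hmod
      set u := s % (k + 1) with hu
      have hult : u < k + 1 := Nat.mod_lt _ (by omega)
      have h3 : (k + u) % (k + 1) = k := by
        rw [hu, Nat.add_mod_mod]
        exact hmod
      rcases Nat.eq_zero_or_pos u with h0 | hpos
      · exact h0
      · have h4 : k + u = (u - 1) + 1 * (k + 1) := by omega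
        rw [h4, Nat.add_mul_mod_self_right, Nat.mod_eq_of_lt (by omega)] at h3
        omega
    have hττ' : τ = τ' := by
      rw [← hs, ← List.rotate_mod, hτlen, hs0, List.rotate_zero]
    have hAA' : A = A' := by
      apply Equiv.ext
      intro x
      rcases Classical.em (x ∈ Set.Icc 1 (k + 1)) with hx | hx
      · have hx' : x ∈ List.range' 1 (k + 1) := by
          rw [mem_range1]
          rw [Set.mem_Icc] at hx
          omega
        have := List.map_inj_left.mp (hτ ▸ hτ' ▸ hττ') x hx'
        exact this
      · rw [hAfix x (by simp only [Set.mem_Icc] at hx ⊢; omega),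
          hA'fix x (by simp only [Set.mem_Icc] at hx ⊢; omega)]
    have hde : ∀ i ∈ Finset.Icc 2 k, d i = e i := by
      apply repr_unique k d e hd
      · intro i hi
        rw [Finset.mem_Icc] at hi
        exact he i (Finset.mem_Icc.mpr ⟨hi.1, by omega⟩)
      · rw [← hA, ← hA', hAA']
    exact ⟨e, he, fun i hi => (hde i hi).symm, hee⟩
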